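/- Let G be a locally finite simple graph and x a vertex satisfying CD(0,N) for some N ∈ (0,∞). Then N ≥ 4d_x/(d_x+3). -/

import Mathlib

open Finset Filter Topology ENNReal SimpleGraph

noncomputable instance (priority := low) finLocFin {V : Type*} [Finite V] (G : SimpleGraph V) :
    G.LocallyFinite := fun _ => Fintype.ofFinite _

/-- Non-normalized graph Laplacian. -/
noncomputable def lap {V : Type*} (G : SimpleGraph V) [G.LocallyFinite] (f : V → ℝ) (x : V) : ℝ :=
  ∑ y ∈ G.neighborFinset x, (f y - f x)

/-- Bakry–Émery Γ operator. -/
noncomputable def gam {V : Type*} (G : SimpleGraph V) [G.LocallyFinite] (f g : V → ℝ) (x : V) : ℝ :=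
  (lap G (fun v => f v * g v) x - f x * lap G g x - g x * lap G f x) / 2

/-- Bakry–Émery Γ₂ operator. -/
noncomputable def gam2 {V : Type*} (G : SimpleGraph V) [G.LocallyFinite] (f g : V → ℝ) (x : V) : ℝ :=
  (lap G (gam G f g) x - gam G f (lap G g) x - gam G (lap G f) g x) / 2

/-- The coefficient 1/N for N ∈ (0,∞], with 1/∞ = 0. -/
noncomputable def invN (N : ℝ≥0∞) : ℝ := (N⁻¹).toReal

/-- The vertex `x` satisfies the curvature-dimension inequality CD(K,N). -/
def CD {V : Type*} (G : SimpleGraph V) [G.LocallyFinite] (K : ℝ) (N : ℝ≥0∞) (x : V) : Prop :=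
  ∀ f : V → ℝ, gam2 G f f x ≥ invN N * (lap G f x) ^ 2 + K * gam G f f x

theorem stmt_6 {V : Type*} (G : SimpleGraph V) [G.LocallyFinite] (x : V)
    (N : ℝ) (hN : 0 < N) (h : CD G 0 (ENNReal.ofReal N) x) :
    4 * (G.degree x : ℝ) / ((G.degree x : ℝ) + 3) ≤ N := by
  classical
  set f : V → ℝ := fun v => if v = x then 1 else 0 with hf
  set d : ℝ := (G.degree x : ℝ) with hdd
  have hdnn : 0 ≤ d := Nat.cast_nonneg _
  have hcard : ((G.neighborFinset x).card : ℝ) = d := by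
    rw [G.card_neighborFinset_eq_degree]
  have hfx : f x = 1 := by simp [hf]
  have hfy : ∀ y, y ≠ x → f y = 0 := by intro y hy; simp [hf, hy]
  have hne : ∀ y ∈ G.neighborFinset x, y ≠ x := fun y hy =>
    ((G.mem_neighborFinset x y).mp hy).ne'
  have hff : (fun v => f v * f v) = f := by
    funext v; by_cases hv : v = x <;> simp [hf, hv]
  -- lap f at x
  have hlapx : lap G f x = -d := by
    have e : ∀ y ∈ G.neighborFinset x, f y - f x = -1 := by
      intro y hy; rw [hfy y (hne y hy), hfx]; ring
    calc lap G f x = ∑ y ∈ G.neighborFinset x, (f y - f x) := rfl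
    _ = ∑ _y ∈ G.neighborFinset x, (-1 : ℝ) := Finset.sum_congr rfl e
    _ = -d := by rw [Finset.sum_const, nsmul_eq_mul, hcard]; ring
  -- lap f at neighbors
  have hlapn : ∀ y ∈ G.neighborFinset x, lap G f y = 1 := by
    intro y hy
    have hxy : x ∈ G.neighborFinset y :=
      (G.mem_neighborFinset y x).mpr ((G.mem_neighborFinset x y).mp hy).symm
    have hsum : ∑ z ∈ G.neighborFinset y, f z = 1 := by
      rw [hf]
      rw [Finset.sum_ite_eq' (G.neighborFinset y) x (fun _ => (1 : ℝ))]
      simp [hxy]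
    calc lap G f y = ∑ z ∈ G.neighborFinset y, (f z - f y) := rfl
    _ = ∑ z ∈ G.neighborFinset y, f z - ∑ _z ∈ G.neighborFinset y, f y :=
        Finset.sum_sub_distrib _ _
    _ = 1 := by rw [hsum, hfy y (hne y hy)]; simp
  -- gam f f values
  have hgam : ∀ v, gam G f f v = (lap G f v - 2 * f v * lap G f v) / 2 := by
    intro v; unfold gam; rw [hff]; ring
  have hgamx : gam G f f x = d / 2 := by rw [hgam, hlapx, hfx]; ring
  have hgamn : ∀ y ∈ G.neighborFinset x, gam G f f y = 1 / 2 := by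
    intro y hy
    rw [hgam, hlapn y hy, hfy y (hne y hy)]; ring
  -- lap (gam f f) at x
  have h1 : lap G (gam G f f) x = d * (1 - d) / 2 := by
    have e : ∀ y ∈ G.neighborFinset x, gam G f f y - gam G f f x = 1/2 - d/2 := by
      intro y hy; rw [hgamn y hy, hgamx]
    calc lap G (gam G f f) x = ∑ y ∈ G.neighborFinset x, (gam G f f y - gam G f f x) := rfl
    _ = ∑ _y ∈ G.neighborFinset x, (1/2 - d/2) := Finset.sum_congr rfl e
    _ = d * (1 - d) / 2 := by rw [Finset.sum_const, nsmul_eq_mul, hcard]; ring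
  -- lap (lap f) at x
  have h2 : lap G (lap G f) x = d * (1 + d) := by
    have e : ∀ y ∈ G.neighborFinset x, lap G f y - lap G f x = 1 + d := by
      intro y hy; rw [hlapn y hy, hlapx]; ring
    calc lap G (lap G f) x = ∑ y ∈ G.neighborFinset x, (lap G f y - lap G f x) := rfl
    _ = ∑ _y ∈ G.neighborFinset x, (1 + d) := Finset.sum_congr rfl e
    _ = d * (1 + d) := by rw [Finset.sum_const, nsmul_eq_mul, hcard]
  -- lap (f * lap f) at x
  have h3 : lap G (fun v => f v * lap G f v) x = d * d := by
    have e : ∀ y ∈ G.neighborFinset x, f y * lap G f y - f x * lap G f x = d := by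
      intro y hy; rw [hfy y (hne y hy), hfx, hlapx]; ring
    calc lap G (fun v => f v * lap G f v) x
        = ∑ y ∈ G.neighborFinset x, (f y * lap G f y - f x * lap G f x) := rfl
    _ = ∑ _y ∈ G.neighborFinset x, d := Finset.sum_congr rfl e
    _ = d * d := by rw [Finset.sum_const, nsmul_eq_mul, hcard]
  -- gam f (lap f) at x
  have h4 : gam G f (lap G f) x = -(d * (1 + d)) / 2 := by
    unfold gam
    rw [h3, h2, hfx, hlapx]; ring
  have hcomm : gam G (lap G f) f x = gam G f (lap G f) x := by
    unfold gam
    have e : (fun v => lap G f v * f v) = (fun v => f v * lap G f v) :=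
      funext fun v => mul_comm _ _
    rw [e]; ring
  have hg2 : gam2 G f f x = d * (d + 3) / 4 := by
    unfold gam2
    rw [h1, h4, hcomm, h4]; ring
  have hinv : invN (ENNReal.ofReal N) = N⁻¹ := by
    unfold invN
    rw [ENNReal.toReal_inv, ENNReal.toReal_ofReal hN.le]
  have hcd := h f
  rw [hg2, hlapx, hinv] at hcd
  have hkey : N⁻¹ * (-d) ^ 2 ≤ d * (d + 3) / 4 := by linarith [hcd]
  have hkey2 : d ^ 2 ≤ N * (d * (d + 3) / 4) := by
    have h5 := mul_le_mul_of_nonneg_left hkey hN.le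
    calc d ^ 2 = N * (N⁻¹ * (-d) ^ 2) := by field_simp
    _ ≤ N * (d * (d + 3) / 4) := h5
  rw [div_le_iff₀ (by linarith : (0 : ℝ) < d + 3)]
  rcases eq_or_lt_of_le hdnn with hd0 | hd0
  · nlinarith
  · nlinarith [mul_pos hd0 hN]
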